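/- For a scalar system with parameters a, b ≠ 0 and m > 0 satisfying a²(ε+m) − m > 0, the elastic-net state cost q(x) = |x| + εx² with value-function weight m yields, via the Riccati-like relation p(x) = q(x) + m x² and u*(x) = ∇r*(−(2bm/a)x), the controller u*(x) = −(a/b)x when |2mx/a| ≤ 1, and u*(x) = −(a/b)x + (|2mx/a| − 1)·sign(2mx/a)/(2b(ε+m)) when |2mx/a| > 1; in particular u* is continuous and piecewise linear in x. -/

import Mathlib

/-- One-dimensional Fenchel conjugate. -/
noncomputable def conj1 (f : ℝ → ℝ) (ξ : ℝ) : ℝ := ⨆ x, (ξ * x - f x)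

open Filter Asymptotics

private lemma hasDerivAt_maxsq (t : ℝ) :
    HasDerivAt (fun s : ℝ => (max s 0) ^ 2) (2 * max t 0) t := by
  rcases lt_trichotomy t 0 with ht | rfl | ht
  · have h0 : max t 0 = 0 := max_eq_right ht.le
    rw [h0, mul_zero]
    have : (fun s : ℝ => (0:ℝ)) =ᶠ[nhds t] fun s : ℝ => (max s 0) ^ 2 := by
      filter_upwards [eventually_lt_nhds ht] with s hs
      rw [max_eq_right hs.le]; ring
    exact (hasDerivAt_const t (0:ℝ)).congr_of_eventuallyEq this.symm
  · simp only [max_self, mul_zero]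
    rw [hasDerivAt_iff_isLittleO, isLittleO_iff]
    intro c hc
    filter_upwards [Metric.eventually_nhds_iff.2 ⟨c, hc, fun {y} hy => hy⟩] with s hs
    simp only [sub_zero, smul_zero, max_self]
    have hs' : |s| < c := by simpa [Real.dist_eq] using hs
    have key : |(max s 0) ^ 2| ≤ c * |s| := by
      rw [abs_of_nonneg (by positivity)]
      rcases le_or_gt s 0 with h | h
      · rw [max_eq_right h]
        have : (0:ℝ) ≤ c * |s| := by positivity
        simpa using this
      · rw [max_eq_left h.le]
        have h2 : s ^ 2 = |s| * |s| := by rw [← sq_abs]; ring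
        rw [h2]
        exact mul_le_mul_of_nonneg_right hs'.le (abs_nonneg s)
    calc ‖(s ⊔ 0) ^ 2 - 0 ^ 2‖ = |(max s 0) ^ 2| := by norm_num
      _ ≤ c * |s| := key
      _ = c * ‖s‖ := by rw [Real.norm_eq_abs]
  · have h0 : max t 0 = t := max_eq_left ht.le
    rw [h0]
    have heq : (fun s : ℝ => s ^ 2) =ᶠ[nhds t] fun s : ℝ => (max s 0) ^ 2 := by
      filter_upwards [eventually_gt_nhds ht] with s hs
      rw [max_eq_left hs.le]
    have h2 : HasDerivAt (fun s : ℝ => s ^ 2) (2 * t) t := by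
      simpa using (hasDerivAt_pow 2 t)
    exact h2.congr_of_eventuallyEq heq.symm

private lemma hasDerivAt_K (c : ℝ) (hc : 0 < c) (ξ : ℝ) :
    HasDerivAt (fun y : ℝ => (max (|y| - 1) 0) ^ 2 / (4 * c))
      ((max (ξ - 1) 0 - max (-ξ - 1) 0) / (2 * c)) ξ := by
  rcases lt_or_ge |ξ| 1 with hlt | hge
  · have h1 : max (ξ - 1) 0 = 0 := max_eq_right (by cases abs_lt.1 hlt; linarith)
    have h2 : max (-ξ - 1) 0 = 0 := max_eq_right (by cases abs_lt.1 hlt; linarith)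
    rw [h1, h2]
    have heq : (fun y : ℝ => (0:ℝ)) =ᶠ[nhds ξ]
        fun y : ℝ => (max (|y| - 1) 0) ^ 2 / (4 * c) := by
      have hcont : ContinuousAt (fun y : ℝ => |y|) ξ := continuous_abs.continuousAt
      filter_upwards [hcont.eventually_lt continuousAt_const hlt] with y hy
      rw [max_eq_right (by linarith : |y| - 1 ≤ 0)]
      norm_num
    have := (hasDerivAt_const ξ (0:ℝ)).congr_of_eventuallyEq heq.symm
    refine this.congr_deriv ?_
    ring
  · rcases le_or_gt 1 ξ with hpos | hneg
    · have h2 : max (-ξ - 1) 0 = 0 := max_eq_right (by linarith)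
      have hd : HasDerivAt (fun y : ℝ => (max (y - 1) 0) ^ 2 / (4 * c))
          ((2 * max (ξ - 1) 0 * 1) / (4 * c)) ξ :=
        (HasDerivAt.comp ξ (hasDerivAt_maxsq (ξ - 1)) ((hasDerivAt_id ξ).sub_const 1)).div_const _
      have heq : (fun y : ℝ => (max (y - 1) 0) ^ 2 / (4 * c)) =ᶠ[nhds ξ]
          fun y : ℝ => (max (|y| - 1) 0) ^ 2 / (4 * c) := by
        filter_upwards [eventually_gt_nhds (show (0:ℝ) < ξ by linarith)] with y hy
        rw [abs_of_pos hy]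
      have := hd.congr_of_eventuallyEq heq.symm
      refine this.congr_deriv ?_
      rw [h2]
      field_simp
      ring
    · have hle : ξ ≤ -1 := by
        rcases le_or_gt 0 ξ with h | h
        · rw [abs_of_nonneg h] at hge; linarith
        · rw [abs_of_neg h] at hge; linarith
      have h1 : max (ξ - 1) 0 = 0 := max_eq_right (by linarith)
      have hin : HasDerivAt (fun y : ℝ => -y - 1) (-1) ξ :=
        ((hasDerivAt_id ξ).neg).sub_const 1
      have hd : HasDerivAt (fun y : ℝ => (max (-y - 1) 0) ^ 2 / (4 * c))
          ((2 * max (-ξ - 1) 0 * (-1)) / (4 * c)) ξ :=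
        (HasDerivAt.comp ξ (hasDerivAt_maxsq (-ξ - 1)) hin).div_const _
      have heq : (fun y : ℝ => (max (-y - 1) 0) ^ 2 / (4 * c)) =ᶠ[nhds ξ]
          fun y : ℝ => (max (|y| - 1) 0) ^ 2 / (4 * c) := by
        filter_upwards [eventually_lt_nhds (show ξ < 0 by linarith)] with y hy
        rw [abs_of_neg hy]
      have := hd.congr_of_eventuallyEq heq.symm
      refine this.congr_deriv ?_
      rw [h1]
      field_simp
      ring

private lemma conj1_elastic (c : ℝ) (hc : 0 < c) (p : ℝ → ℝ)
    (hp : ∀ x, p x = |x| + c * x ^ 2) (ξ : ℝ) :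
    conj1 p ξ = (max (|ξ| - 1) 0) ^ 2 / (4 * c) := by
  set A := max (|ξ| - 1) 0 with hA
  have hA0 : 0 ≤ A := le_max_right _ _
  have hub : ∀ x, ξ * x - p x ≤ A ^ 2 / (4 * c) := by
    intro x
    rw [hp]
    have h1 : ξ * x ≤ |ξ| * |x| := (le_abs_self _).trans (le_of_eq (abs_mul ξ x))
    have h2 : x ^ 2 = |x| ^ 2 := (sq_abs x).symm
    have h3 : |ξ| - 1 ≤ A := le_max_left _ _
    have h4 : A * |x| - c * |x| ^ 2 ≤ A ^ 2 / (4 * c) := by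
      rw [le_div_iff₀ (by positivity : (0:ℝ) < 4 * c)]
      nlinarith [sq_nonneg (2 * c * |x| - A)]
    have h5 : ξ * x - (|x| + c * x ^ 2) ≤ A * |x| - c * |x| ^ 2 := by
      nlinarith [abs_nonneg x]
    linarith
  have hbdd : BddAbove (Set.range fun x => ξ * x - p x) :=
    ⟨A ^ 2 / (4 * c), by rintro _ ⟨x, rfl⟩; exact hub x⟩
  rw [conj1]
  refine le_antisymm (ciSup_le hub) ?_
  rcases le_or_gt |ξ| 1 with h | h
  · have hA' : A = 0 := max_eq_right (by linarith)
    have h0 : ξ * 0 - p 0 = 0 := by rw [hp]; norm_num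
    calc A ^ 2 / (4 * c) = ξ * 0 - p 0 := by rw [h0, hA']; norm_num
      _ ≤ ⨆ x, (ξ * x - p x) := le_ciSup hbdd 0
  · rcases le_or_gt 0 ξ with hs | hs
    · have hξ : 1 < ξ := by rwa [abs_of_nonneg hs] at h
      have hx0 : 0 ≤ (ξ - 1) / (2 * c) := div_nonneg (by linarith) (by positivity)
      have hval : ξ * ((ξ - 1) / (2 * c)) - p ((ξ - 1) / (2 * c)) = A ^ 2 / (4 * c) := by
        rw [hp, abs_of_nonneg hx0, hA, abs_of_nonneg hs,
          max_eq_left (by linarith : (0:ℝ) ≤ ξ - 1)]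
        field_simp
        ring
      rw [← hval]
      exact le_ciSup hbdd _
    · have hξ : ξ < -1 := by rw [abs_of_neg hs] at h; linarith
      have hx0 : (ξ + 1) / (2 * c) ≤ 0 :=
        div_nonpos_of_nonpos_of_nonneg (by linarith) (by positivity)
      have hval : ξ * ((ξ + 1) / (2 * c)) - p ((ξ + 1) / (2 * c)) = A ^ 2 / (4 * c) := by
        rw [hp, abs_of_nonpos hx0, hA, abs_of_neg hs,
          max_eq_left (by linarith : (0:ℝ) ≤ -ξ - 1)]
        field_simp
        ring
      rw [← hval]
      exact le_ciSup hbdd _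

theorem elastic_net_controller
    (a b m ε : ℝ) (ha : a ≠ 0) (hb : b ≠ 0) (hm : 0 < m) (hε : 0 < ε)
    (hstab : a ^ 2 * (ε + m) - m > 0)
    (q p : ℝ → ℝ)
    (hq : ∀ x, q x = |x| + ε * x ^ 2)
    (hp : ∀ x, p x = q x + m * x ^ 2)
    (rstar : ℝ → ℝ)
    (hrdiff : Differentiable ℝ rstar)
    (hriccati : ∀ ξ : ℝ, conj1 p ξ + rstar (-b * ξ) = a ^ 2 * ξ ^ 2 / (4 * m))
    (ustar : ℝ → ℝ)
    (hustar : ∀ x, ustar x = deriv rstar (-(2 * b * m / a) * x)) :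
    (∀ x : ℝ,
      ustar x =
        if |2 * m * x / a| ≤ 1 then -(a / b) * x
        else -(a / b) * x +
          (|2 * m * x / a| - 1) * Real.sign (2 * m * x / a) / (2 * b * (ε + m))) ∧
      Continuous ustar := by
  have hc : 0 < ε + m := by positivity
  have hpc : ∀ x, p x = |x| + (ε + m) * x ^ 2 := by
    intro x; rw [hp, hq]; ring
  have hconj : ∀ ξ, conj1 p ξ = (max (|ξ| - 1) 0) ^ 2 / (4 * (ε + m)) :=
    conj1_elastic (ε + m) hc p hpc
  -- explicit formula for rstar
  have hrs : ∀ y, rstar y =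
      a ^ 2 * (-y / b) ^ 2 / (4 * m) - (max (|-y / b| - 1) 0) ^ 2 / (4 * (ε + m)) := by
    intro y
    have h1 := hriccati (-y / b)
    rw [hconj] at h1
    have hby : -b * (-y / b) = y := by field_simp
    rw [hby] at h1
    linarith
  -- the explicit formula has a derivative everywhere
  have hg : ∀ y : ℝ, HasDerivAt (fun y : ℝ => -y / b) (-1 / b) y := by
    intro y
    simpa using ((hasDerivAt_id y).neg).div_const b
  have hDer : ∀ y : ℝ, deriv rstar y =
      a ^ 2 * (2 * (-y / b) * (-1 / b)) / (4 * m) -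
        (max (-y / b - 1) 0 - max (-(-y / b) - 1) 0) / (2 * (ε + m)) * (-1 / b) := by
    intro y
    have h1 : HasDerivAt (fun y : ℝ => a ^ 2 * (-y / b) ^ 2 / (4 * m))
        (a ^ 2 * (2 * (-y / b) ^ 1 * (-1 / b)) / (4 * m)) y :=
      (((hg y).pow 2).const_mul (a ^ 2)).div_const (4 * m)
    have h2 : HasDerivAt (fun y : ℝ => (max (|-y / b| - 1) 0) ^ 2 / (4 * (ε + m)))
        ((max (-y / b - 1) 0 - max (-(-y / b) - 1) 0) / (2 * (ε + m)) * (-1 / b)) y :=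
      by have := HasDerivAt.comp y (hasDerivAt_K (ε + m) hc (-y / b)) (hg y); exact this
    have h3 : HasDerivAt rstar
        (a ^ 2 * (2 * (-y / b) ^ 1 * (-1 / b)) / (4 * m) -
          (max (-y / b - 1) 0 - max (-(-y / b) - 1) 0) / (2 * (ε + m)) * (-1 / b)) y := by
      have hre : rstar = fun y => a ^ 2 * (-y / b) ^ 2 / (4 * m) -
          (max (|-y / b| - 1) 0) ^ 2 / (4 * (ε + m)) := funext hrs
      rw [hre]
      exact h1.sub h2
    rw [h3.deriv]
    ring
  -- key explicit formula for ustar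
  have key : ∀ x, ustar x = -(a / b) * x +
      (max (2 * m * x / a - 1) 0 - max (-(2 * m * x / a) - 1) 0) / (2 * b * (ε + m)) := by
    intro x
    rw [hustar, hDer]
    have harg : -(-(2 * b * m / a) * x) / b = 2 * m * x / a := by
      field_simp
    rw [harg]
    field_simp
    ring
  constructor
  · intro x
    rw [key x]
    set t := 2 * m * x / a with ht
    split_ifs with h
    · rcases abs_le.1 h with ⟨h1, h2⟩
      rw [max_eq_right (by linarith), max_eq_right (by linarith)]
      norm_num
    · push_neg at h
      rcases le_or_gt 0 t with hs | hs
      · have ht1 : 1 < t := by rwa [abs_of_nonneg hs] at h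
        rw [max_eq_left (by linarith), max_eq_right (by linarith),
          Real.sign_of_pos (by linarith), abs_of_nonneg hs]
        ring
      · have ht1 : t < -1 := by rw [abs_of_neg hs] at h; linarith
        rw [max_eq_right (by linarith), max_eq_left (by linarith),
          Real.sign_of_neg hs, abs_of_neg hs]
        ring
  · have hue : ustar = fun x => -(a / b) * x +
        (max (2 * m * x / a - 1) 0 - max (-(2 * m * x / a) - 1) 0) / (2 * b * (ε + m)) :=
      funext key
    rw [hue]
    fun_prop
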